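/- For all ω > 0 and ω⁰ > 0, one has the exact identity ∫_ℝ [ (ω⁰ − ω)·φ_ω(x)² + (1/2)·φ_ω(x)⁴ − (1/2)·φ_{ω⁰}(x)⁴ ] dx = −(4/3)·(√ω − √{ω⁰})²·(√ω + 2√{ω⁰}). Moreover, for all 0 < ω₋ ≤ ω⁺ there exists a constant C > 0, depending only on ω₋ and ω⁺, such that for all ω, ω⁰ ∈ [ω₋, ω⁺] the absolute value of this integral is at most C·|ω − ω⁰|². -/

import Mathlib

open MeasureTheory Real Filter Set Topology


open MeasureTheory

/-- The soliton profile `φ_ω(x) = √(2ω)/cosh(√ω x)`. -/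
noncomputable def phi (ω : ℝ) (x : ℝ) : ℝ :=
  Real.sqrt (2 * ω) / Real.cosh (Real.sqrt ω * x)


lemma hasDerivAt_tanh' (x : ℝ) : HasDerivAt Real.tanh (1 / Real.cosh x ^ 2) x := by
  have h : HasDerivAt (fun y => Real.sinh y / Real.cosh y)
      ((Real.cosh x * Real.cosh x - Real.sinh x * Real.sinh x) / Real.cosh x ^ 2) x :=
    (Real.hasDerivAt_sinh x).div (Real.hasDerivAt_cosh x) (Real.cosh_pos x).ne'
  have e : ∀ y, Real.tanh y = Real.sinh y / Real.cosh y := fun y => Real.tanh_eq_sinh_div_cosh y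
  have h1 : Real.cosh x * Real.cosh x - Real.sinh x * Real.sinh x = 1 := by
    have := Real.cosh_sq_sub_sinh_sq x; ring_nf at this ⊢; linarith
  rw [h1] at h
  simpa [funext e] using h

lemma tendsto_tanh_atTop : Tendsto Real.tanh atTop (𝓝 1) := by
  have he : ∀ x : ℝ, Real.tanh x = (1 - Real.exp (-2 * x)) / (1 + Real.exp (-2 * x)) := by
    intro x
    rw [Real.tanh_eq_sinh_div_cosh, Real.sinh_eq, Real.cosh_eq]
    rw [div_eq_div_iff (by positivity) (by positivity)]
    rw [show (-2:ℝ) * x = -x + -x by ring, Real.exp_add]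
    have h2 : Real.exp x * Real.exp (-x) = 1 := by rw [← Real.exp_add]; simp
    have h3 : Real.exp x * Real.exp (-x) ^ 2 = Real.exp (-x) := by
      rw [pow_two, ← mul_assoc, h2, one_mul]
    ring_nf
    linarith [h3]
  have hexp : Tendsto (fun x : ℝ => Real.exp (-2 * x)) atTop (𝓝 0) := by
    apply Real.tendsto_exp_atBot.comp
    exact tendsto_id.const_mul_atTop_of_neg (by norm_num)
  have h : Tendsto (fun x : ℝ => (1 - Real.exp (-2 * x)) / (1 + Real.exp (-2 * x))) atTop
      (𝓝 ((1-0)/(1+0))) :=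
    (tendsto_const_nhds.sub hexp).div (tendsto_const_nhds.add hexp) (by norm_num)
  norm_num at h
  simpa [funext he] using h

lemma sech2_Ioi : IntegrableOn (fun x => 1 / Real.cosh x ^ 2) (Ioi 0) ∧
    (∫ x in Ioi (0:ℝ), 1 / Real.cosh x ^ 2) = 1 := by
  have hderiv : ∀ x ∈ Ici (0:ℝ), HasDerivAt Real.tanh (1 / Real.cosh x ^ 2) x :=
    fun x _ => hasDerivAt_tanh' x
  have hpos : ∀ x ∈ Ioi (0:ℝ), 0 ≤ 1 / Real.cosh x ^ 2 := fun x _ => by positivity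
  refine ⟨integrableOn_Ioi_deriv_of_nonneg' hderiv hpos tendsto_tanh_atTop, ?_⟩
  rw [integral_Ioi_of_hasDerivAt_of_nonneg' hderiv hpos tendsto_tanh_atTop]
  simp [Real.tanh_eq_sinh_div_cosh]

lemma tendsto_g4_atTop : Tendsto (fun x => Real.tanh x - Real.tanh x ^ 3 / 3) atTop (𝓝 (2/3)) := by
  have h := tendsto_tanh_atTop
  have := h.sub ((h.pow 3).div_const 3)
  norm_num at this
  exact this

lemma hasDerivAt_g4 (x : ℝ) :
    HasDerivAt (fun x => Real.tanh x - Real.tanh x ^ 3 / 3) (1 / Real.cosh x ^ 4) x := by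
  have h := ((hasDerivAt_tanh' x).sub (((hasDerivAt_tanh' x).pow 3).div_const 3))
  have e : 1 / Real.cosh x ^ 2 - 3 * Real.tanh x ^ 2 * (1 / Real.cosh x ^ 2) / 3
      = 1 / Real.cosh x ^ 4 := by
    have hc := (Real.cosh_pos x).ne'
    rw [Real.tanh_eq_sinh_div_cosh]
    have h1 := Real.cosh_sq_sub_sinh_sq x
    field_simp
    linear_combination h1
  rw [← e]; exact h

lemma sech4_Ioi : IntegrableOn (fun x => 1 / Real.cosh x ^ 4) (Ioi 0) ∧
    (∫ x in Ioi (0:ℝ), 1 / Real.cosh x ^ 4) = 2/3 := by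
  have hderiv : ∀ x ∈ Ici (0:ℝ), HasDerivAt (fun x => Real.tanh x - Real.tanh x ^ 3 / 3)
      (1 / Real.cosh x ^ 4) x := fun x _ => hasDerivAt_g4 x
  have hpos : ∀ x ∈ Ioi (0:ℝ), 0 ≤ 1 / Real.cosh x ^ 4 := fun x _ => by positivity
  refine ⟨integrableOn_Ioi_deriv_of_nonneg' hderiv hpos tendsto_g4_atTop, ?_⟩
  rw [integral_Ioi_of_hasDerivAt_of_nonneg' hderiv hpos tendsto_g4_atTop]
  simp [Real.tanh_eq_sinh_div_cosh]

lemma integrable_of_even_aux {f : ℝ → ℝ} (hf : IntegrableOn f (Ioi 0)) :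
    Integrable (fun x => f |x|) := by
  have int_Iic : IntegrableOn (fun x ↦ f |x|) (Iic 0) := by
    rw [← Measure.map_neg_eq_self (volume : Measure ℝ)]
    let m : MeasurableEmbedding fun x : ℝ => -x := (Homeomorph.neg ℝ).measurableEmbedding
    rw [m.integrableOn_map_iff]
    simp_rw [Function.comp_def, abs_neg, neg_preimage, neg_Iic, neg_zero]
    exact Iff.mpr integrableOn_Ici_iff_integrableOn_Ioi
      (hf.congr_fun (fun x hx => (by rw [abs_of_pos hx] : f x = f |x|)) measurableSet_Ioi)
  have int_Ioi : IntegrableOn (fun x ↦ f |x|) (Ioi 0) :=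
    hf.congr_fun (fun x hx => (by rw [abs_of_pos hx] : f x = f |x|)) measurableSet_Ioi
  rw [← integrableOn_univ, ← Iic_union_Ioi (a := (0:ℝ))]
  exact int_Iic.union int_Ioi

lemma sech2_integrable : Integrable (fun x : ℝ => 1 / Real.cosh x ^ 2) := by
  have := integrable_of_even_aux sech2_Ioi.1
  simpa [Real.cosh_abs] using this

lemma sech2_integral : (∫ x : ℝ, 1 / Real.cosh x ^ 2) = 2 := by
  have := integral_comp_abs (f := fun x => 1 / Real.cosh x ^ 2)
  simp only [Real.cosh_abs] at this
  rw [this, sech2_Ioi.2]; norm_num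

lemma sech4_integrable : Integrable (fun x : ℝ => 1 / Real.cosh x ^ 4) := by
  have := integrable_of_even_aux sech4_Ioi.1
  simpa [Real.cosh_abs] using this

lemma sech4_integral : (∫ x : ℝ, 1 / Real.cosh x ^ 4) = 4/3 := by
  have := integral_comp_abs (f := fun x => 1 / Real.cosh x ^ 4)
  simp only [Real.cosh_abs] at this
  rw [this, sech4_Ioi.2]; norm_num

lemma phi_facts (ω : ℝ) (hω : 0 < ω) :
    Integrable (fun x => phi ω x ^ 2) ∧ Integrable (fun x => phi ω x ^ 4) ∧
    (∫ x, phi ω x ^ 2) = 4 * Real.sqrt ω ∧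
    (∫ x, phi ω x ^ 4) = (16/3) * Real.sqrt ω ^ 3 := by
  set a := Real.sqrt ω with ha_def
  have ha : 0 < a := Real.sqrt_pos.mpr hω
  have ha2 : a ^ 2 = ω := Real.sq_sqrt hω.le
  have h2 : ∀ x, phi ω x ^ 2 = 2 * ω * (1 / Real.cosh (a * x) ^ 2) := by
    intro x
    rw [phi, div_pow, Real.sq_sqrt (by positivity)]
    ring
  have h4 : ∀ x, phi ω x ^ 4 = 4 * ω ^ 2 * (1 / Real.cosh (a * x) ^ 4) := by
    intro x
    rw [phi, div_pow, show (4:ℕ) = 2 * 2 from rfl, pow_mul, Real.sq_sqrt (by positivity)]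
    ring
  have i2 : Integrable (fun x => 1 / Real.cosh (a * x) ^ 2) :=
    sech2_integrable.comp_mul_left' ha.ne'
  have i4 : Integrable (fun x => 1 / Real.cosh (a * x) ^ 4) :=
    sech4_integrable.comp_mul_left' ha.ne'
  have e2 : (∫ x, 1 / Real.cosh (a * x) ^ 2) = a⁻¹ * 2 := by
    rw [Measure.integral_comp_mul_left (fun y => 1 / Real.cosh y ^ 2) a, sech2_integral,
      abs_of_pos (by positivity), smul_eq_mul]
  have e4 : (∫ x, 1 / Real.cosh (a * x) ^ 4) = a⁻¹ * (4/3) := by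
    rw [Measure.integral_comp_mul_left (fun y => 1 / Real.cosh y ^ 4) a, sech4_integral,
      abs_of_pos (by positivity), smul_eq_mul]
  refine ⟨by simpa [funext h2] using i2.const_mul (2 * ω),
    by simpa [funext h4] using i4.const_mul (4 * ω ^ 2), ?_, ?_⟩
  · rw [funext h2, MeasureTheory.integral_const_mul, e2]
    field_simp
    nlinarith [ha2]
  · rw [funext h4, MeasureTheory.integral_const_mul, e4]
    field_simp
    nlinarith [ha2, sq_nonneg a]

lemma main_part1 (ω ω₀ : ℝ) (hω : 0 < ω) (hω₀ : 0 < ω₀) :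
    (∫ x : ℝ, ((ω₀ - ω) * (phi ω x) ^ 2 + (1 / 2) * (phi ω x) ^ 4
        - (1 / 2) * (phi ω₀ x) ^ 4)) =
      -(4 / 3) * (Real.sqrt ω - Real.sqrt ω₀) ^ 2 *
        (Real.sqrt ω + 2 * Real.sqrt ω₀) := by
  obtain ⟨i2, i4, e2, e4⟩ := phi_facts ω hω
  obtain ⟨-, i4', -, e4'⟩ := phi_facts ω₀ hω₀
  have split : (∫ x : ℝ, ((ω₀ - ω) * (phi ω x) ^ 2 + (1 / 2) * (phi ω x) ^ 4
      - (1 / 2) * (phi ω₀ x) ^ 4)) =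
      (ω₀ - ω) * (∫ x, phi ω x ^ 2) + (1/2) * (∫ x, phi ω x ^ 4)
        - (1/2) * (∫ x, phi ω₀ x ^ 4) := by
    have hadd : Integrable (fun x => (ω₀ - ω) * phi ω x ^ 2 + (1/2) * phi ω x ^ 4) :=
      (i2.const_mul _).add (i4.const_mul _)
    have hc : Integrable (fun x => (1/2) * phi ω₀ x ^ 4) := i4'.const_mul _
    rw [integral_sub hadd hc,
      integral_add (i2.const_mul _) (i4.const_mul _),
      integral_const_mul, integral_const_mul, integral_const_mul]
  rw [split, e2, e4, e4']
  have ha2 : Real.sqrt ω ^ 2 = ω := Real.sq_sqrt hω.le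
  have hb2 : Real.sqrt ω₀ ^ 2 = ω₀ := Real.sq_sqrt hω₀.le
  linear_combination 4 * Real.sqrt ω * ha2 - 4 * Real.sqrt ω * hb2

lemma main_part2 (ωm ωp : ℝ) (hm : 0 < ωm) (hmp : ωm ≤ ωp) : ∃ C : ℝ, 0 < C ∧
    ∀ ω ∈ Set.Icc ωm ωp, ∀ ω₀ ∈ Set.Icc ωm ωp,
      |∫ x : ℝ, ((ω₀ - ω) * (phi ω x) ^ 2 + (1 / 2) * (phi ω x) ^ 4
          - (1 / 2) * (phi ω₀ x) ^ 4)| ≤ C * |ω - ω₀| ^ 2 := by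
  refine ⟨Real.sqrt ωp / ωm, div_pos (Real.sqrt_pos.mpr (lt_of_lt_of_le hm hmp)) hm, ?_⟩
  intro ω hω ω₀ hω₀
  have hωpos : 0 < ω := lt_of_lt_of_le hm hω.1
  have hω₀pos : 0 < ω₀ := lt_of_lt_of_le hm hω₀.1
  rw [main_part1 ω ω₀ hωpos hω₀pos, sq_abs]
  set a := Real.sqrt ω
  set b := Real.sqrt ω₀
  set sm := Real.sqrt ωm
  set sp := Real.sqrt ωp
  have hsm : 0 < sm := Real.sqrt_pos.mpr hm
  have hsm2 : sm ^ 2 = ωm := Real.sq_sqrt hm.le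
  have ha2 : a ^ 2 = ω := Real.sq_sqrt hωpos.le
  have hb2 : b ^ 2 = ω₀ := Real.sq_sqrt hω₀pos.le
  have hma : sm ≤ a := Real.sqrt_le_sqrt hω.1
  have hap : a ≤ sp := Real.sqrt_le_sqrt hω.2
  have hmb : sm ≤ b := Real.sqrt_le_sqrt hω₀.1
  have hbp : b ≤ sp := Real.sqrt_le_sqrt hω₀.2
  have ha : 0 < a := lt_of_lt_of_le hsm hma
  have hb : 0 < b := lt_of_lt_of_le hsm hmb
  rw [abs_of_nonpos (by nlinarith [sq_nonneg (a - b)])]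
  rw [div_mul_eq_mul_div, le_div_iff₀ hm]
  have key : 0 ≤ sp * (a + b) ^ 2 - (4/3) * ωm * (a + 2*b) := by
    have h1 : 4 * sm ^ 2 ≤ (a + b) ^ 2 := by nlinarith
    have h2 : sp * (4 * sm ^ 2) ≤ sp * (a + b) ^ 2 :=
      mul_le_mul_of_nonneg_left h1 (le_trans ha.le hap)
    nlinarith [h2, hsm2]
  have hω' : ω - ω₀ = (a - b) * (a + b) := by rw [← ha2, ← hb2]; ring
  rw [hω']
  nlinarith [mul_nonneg key (sq_nonneg (a - b))]

/-- For all `ω, ω₀ > 0`,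
`∫ [ (ω₀ − ω)·φ_ω² + (1/2)·φ_ω⁴ − (1/2)·φ_{ω₀}⁴ ] = −(4/3)·(√ω − √ω₀)²·(√ω + 2√ω₀)`;
moreover for all `0 < ω₋ ≤ ω⁺` there is `C > 0` depending only on `ω₋, ω⁺` such that
for `ω, ω₀ ∈ [ω₋, ω⁺]` the absolute value of this integral is at most `C·|ω − ω₀|²`. -/
theorem soliton_mass_energy_difference :
    (∀ ω ω₀ : ℝ, 0 < ω → 0 < ω₀ →
      (∫ x : ℝ, ((ω₀ - ω) * (phi ω x) ^ 2 + (1 / 2) * (phi ω x) ^ 4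
          - (1 / 2) * (phi ω₀ x) ^ 4)) =
        -(4 / 3) * (Real.sqrt ω - Real.sqrt ω₀) ^ 2 *
          (Real.sqrt ω + 2 * Real.sqrt ω₀)) ∧
    (∀ ωm ωp : ℝ, 0 < ωm → ωm ≤ ωp → ∃ C : ℝ, 0 < C ∧
      ∀ ω ∈ Set.Icc ωm ωp, ∀ ω₀ ∈ Set.Icc ωm ωp,
        |∫ x : ℝ, ((ω₀ - ω) * (phi ω x) ^ 2 + (1 / 2) * (phi ω x) ^ 4
            - (1 / 2) * (phi ω₀ x) ^ 4)| ≤ C * |ω - ω₀| ^ 2) :=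
  ⟨main_part1, main_part2⟩
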